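/- Let m, d be positive integers, let a > 0, let b ∈ (0, a/(2d)), and let c ∈ (0, 2b(a/(2d) − b)). There exists n₀ such that the following holds whenever V is a set of order n ≥ n₀. Suppose that to every m-element subset S of V there is assigned a set f(S) ⊆ V^d; call a tuple T ∈ V^d good if T ∈ f(S) for some m-element subset S of V. If |f(S)| ≥ a·n^d for every m-element subset S of V, then there exists a set 𝓕 of good tuples with |𝓕| ≤ bn/d such that |f(S) ∩ 𝓕| ≥ cn for every m-element subset S of V and the coordinate sets of distinct tuples in 𝓕 are pairwise disjoint. -/

import Mathlib

set_option maxHeartbeats 1000000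

open Finset


open Classical in
noncomputable def cntG {V : Type} {d : ℕ} (f : Finset V → Set (Fin d → V)) (S : Finset V)
    (F : Finset (Fin d → V)) : ℕ :=
  (F.filter fun T => T ∈ f S).card

lemma fiber_card {V : Type} [Fintype V] [DecidableEq V] {d : ℕ} (i : Fin d) (U : Finset V) :
    ((Finset.univ : Finset (Fin d → V)).filter (fun T : Fin d → V => T i ∈ U)).card ≤
      U.card * (Fintype.card V) ^ (d - 1) := by
  classical
  have h := Finset.card_le_card_of_injOn
    (f := fun T : Fin d → V => (T i, fun j : {j : Fin d // j ≠ i} => T j.1))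
    (s := (Finset.univ : Finset (Fin d → V)).filter (fun T : Fin d → V => T i ∈ U))
    (t := U ×ˢ (Finset.univ : Finset ({j : Fin d // j ≠ i} → V)))
    (by intro T hT; simp only [coe_filter, Set.mem_setOf_eq, mem_filter] at hT; simp [hT.2])
    (by
      intro T hT T' hT' h
      funext j
      by_cases hj : j = i
      · subst hj; exact congrArg Prod.fst h
      · exact congrFun (congrArg Prod.snd h) ⟨j, hj⟩)
  refine h.trans (le_of_eq ?_)
  rw [Finset.card_product, Finset.card_univ, Fintype.card_fun]
  rw [Fintype.card_subtype_compl, Fintype.card_subtype_eq, Fintype.card_fin]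

lemma greedy {V : Type} [Fintype V] (d m : ℕ) (hd : 0 < d) (hm : 0 < m)
    (f : Finset V → Set (Fin d → V)) (a b lam p : ℝ)
    (hb : 0 ≤ b) (hp : 0 < p) (hpab : p = a - b * d)
    (hlam0 : 0 < lam) (hlam1 : lam ≤ 1)
    (hr0 : 0 ≤ 1 - p * (1 - lam))
    (hmn : m ≤ Fintype.card V)
    (hf : ∀ S : Finset V, S.card = m → a * (Fintype.card V : ℝ) ^ d ≤ ((f S).ncard : ℝ)) :
    ∀ k : ℕ, (k : ℝ) ≤ b * (Fintype.card V) / d →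
      ∃ F : Finset (Fin d → V), F.card = k ∧
        (∀ T ∈ F, ∃ S : Finset V, S.card = m ∧ T ∈ f S) ∧
        (∀ T ∈ F, ∀ T' ∈ F, T ≠ T' → ∀ i j : Fin d, T i ≠ T' j) ∧
        ∑ S ∈ powersetCard m (univ : Finset V), lam ^ cntG f S F ≤
          ((powersetCard m (univ : Finset V)).card : ℝ) * (1 - p * (1 - lam)) ^ k := by
  classical
  intro k
  induction k with
  | zero =>
    intro _
    refine ⟨∅, rfl, by simp, by simp, le_of_eq ?_⟩
    simp [cntG]
  | succ k ih =>
    intro hk1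
    have hdR : (0:ℝ) < (d:ℝ) := by exact_mod_cast hd
    have hn0 : 0 < Fintype.card V := lt_of_lt_of_le hm hmn
    have hnR : (0:ℝ) < (Fintype.card V : ℝ) := by exact_mod_cast hn0
    set n : ℕ := Fintype.card V with hn
    obtain ⟨F, hFcard, hgood, hdisj, hPhi⟩ := ih (by
      have : (k:ℝ) ≤ (k:ℝ) + 1 := by linarith
      refine this.trans ?_
      have := hk1; push_cast at this ⊢; linarith)
    set r : ℝ := 1 - p * (1 - lam) with hrdef
    set 𝒮 := powersetCard m (univ : Finset V) with hS𝒮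
    set U : Finset V := F.biUnion (fun T => Finset.image T univ) with hUdef
    have hU : U.card ≤ d * k := by
      refine le_trans card_biUnion_le ?_
      calc ∑ T ∈ F, (Finset.image T univ).card
          ≤ ∑ T ∈ F, d := by
            refine sum_le_sum ?_
            intro T _
            exact le_trans card_image_le (by simp)
        _ = k * d := by rw [sum_const, hFcard, smul_eq_mul]
        _ = d * k := Nat.mul_comm _ _
    set G : Finset (Fin d → V) :=
      univ.filter (fun T : Fin d → V => (∀ i, T i ∉ U) ∧ ∃ S : Finset V, S.card = m ∧ T ∈ f S)
      with hGdef
    have hcardfun : (Fintype.card (Fin d → V)) = n ^ d := by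
      rw [Fintype.card_fun, Fintype.card_fin]
    have hGle : (G.card : ℝ) ≤ (n:ℝ) ^ d := by
      have : G.card ≤ n ^ d := by
        calc G.card ≤ (univ : Finset (Fin d → V)).card := card_le_card (filter_subset _ _)
          _ = n ^ d := by rw [card_univ, hcardfun]
      exact_mod_cast this
    -- the number of used vertices is at most b * n
    have hkd : (d:ℝ) * k ≤ b * n := by
      have h1 : ((k:ℝ) + 1) * d ≤ b * n := by
        have := (div_le_div_iff_of_pos_right hdR).mpr hk1
        calc ((k:ℝ) + 1) * d = ((k+1:ℕ):ℝ) * d := by push_cast; ring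
          _ ≤ (b * n / d) * d := by
            refine mul_le_mul_of_nonneg_right ?_ hdR.le
            exact_mod_cast hk1
          _ = b * n := by field_simp
      nlinarith
    have hUR : (U.card : ℝ) ≤ b * n := by
      have : (U.card : ℝ) ≤ (d:ℝ) * k := by exact_mod_cast hU
      linarith
    -- counting: each f S retains many available good tuples
    have hcount : ∀ S ∈ 𝒮, p * (n:ℝ) ^ d ≤ ((G.filter fun T => T ∈ f S).card : ℝ) := by
      intro S hS
      have hSm : S.card = m := mem_powersetCard_univ.mp hS
      set B := (f S).toFinset with hBdef
      have hBcard : a * (n:ℝ) ^ d ≤ (B.card : ℝ) := by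
        have := hf S hSm
        rwa [Set.ncard_eq_toFinset_card'] at this
      set Bad := univ.filter (fun T : Fin d → V => ∃ i, T i ∈ U) with hBaddef
      have hBadcard : (Bad.card : ℝ) ≤ (d:ℝ) * ((U.card:ℝ) * (n:ℝ) ^ (d-1)) := by
        have hsub : Bad ⊆ (univ : Finset (Fin d)).biUnion
            (fun i => univ.filter (fun T : Fin d → V => T i ∈ U)) := by
          intro T hT
          simp only [hBaddef, mem_filter, mem_univ, true_and] at hT
          obtain ⟨i, hi⟩ := hT
          exact mem_biUnion.mpr ⟨i, mem_univ _, mem_filter.mpr ⟨mem_univ _, hi⟩⟩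
        have h1 : Bad.card ≤ d * (U.card * n ^ (d-1)) := by
          calc Bad.card ≤ ((univ : Finset (Fin d)).biUnion
              (fun i => univ.filter (fun T : Fin d → V => T i ∈ U))).card := card_le_card hsub
            _ ≤ ∑ i : Fin d, (univ.filter (fun T : Fin d → V => T i ∈ U)).card :=
              card_biUnion_le
            _ ≤ ∑ _i : Fin d, U.card * n ^ (d-1) := sum_le_sum (fun i _ => fiber_card i U)
            _ = d * (U.card * n ^ (d-1)) := by
              rw [sum_const, card_univ, Fintype.card_fin, smul_eq_mul]
        exact_mod_cast h1
      have hsplit : (B.card : ℝ) ≤ ((G.filter fun T => T ∈ f S).card : ℝ) + (Bad.card : ℝ) := by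
        have h1 : B ⊆ (G.filter fun T => T ∈ f S) ∪ Bad := by
          intro T hT
          have hTfS : T ∈ f S := by simpa [hBdef] using hT
          by_cases h : ∀ i, T i ∉ U
          · refine mem_union_left _ (mem_filter.mpr ⟨?_, hTfS⟩)
            exact mem_filter.mpr ⟨mem_univ _, h, ⟨S, hSm, hTfS⟩⟩
          · push_neg at h
            exact mem_union_right _ (mem_filter.mpr ⟨mem_univ _, h⟩)
        have := le_trans (card_le_card h1) (card_union_le _ _)
        exact_mod_cast this
      have hd1 : d - 1 + 1 = d := Nat.succ_pred_eq_of_pos hd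
      have hpow : (n:ℝ) ^ d = (n:ℝ) * (n:ℝ) ^ (d-1) := by
        conv_lhs => rw [← hd1]
        rw [pow_succ']
      have hBad2 : (Bad.card : ℝ) ≤ b * (d:ℝ) * (n:ℝ) ^ d := by
        have h2 : (d:ℝ) * ((U.card:ℝ) * (n:ℝ)^(d-1)) ≤ (d:ℝ) * ((b*n) * (n:ℝ)^(d-1)) := by
          have hpn : (0:ℝ) ≤ (n:ℝ)^(d-1) := by positivity
          exact mul_le_mul_of_nonneg_left (mul_le_mul_of_nonneg_right hUR hpn) hdR.le
        calc (Bad.card : ℝ) ≤ (d:ℝ) * ((U.card:ℝ) * (n:ℝ)^(d-1)) := hBadcard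
          _ ≤ (d:ℝ) * ((b*n) * (n:ℝ)^(d-1)) := h2
          _ = b * (d:ℝ) * (n:ℝ)^d := by rw [hpow]; ring
      have : p * (n:ℝ)^d = a * (n:ℝ)^d - b * (d:ℝ) * (n:ℝ)^d := by rw [hpab]; ring
      linarith
    -- G is nonempty
    have hpn : (0:ℝ) < p * (n:ℝ) ^ d := by positivity
    have hGne : G.Nonempty := by
      obtain ⟨S, _, hScard⟩ := Finset.exists_subset_card_eq (le_trans hmn (by simp [hn]) :
        m ≤ (univ : Finset V).card)
      have hS𝒮' : S ∈ 𝒮 := mem_powersetCard_univ.mpr hScard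
      have h1 := lt_of_lt_of_le hpn (hcount S hS𝒮')
      have h2 : 0 < (G.filter fun T => T ∈ f S).card := by exact_mod_cast h1
      obtain ⟨T, hT⟩ := card_pos.mp h2
      exact ⟨T, filter_subset _ _ hT⟩
    have hTnotF : ∀ T ∈ G, T ∉ F := by
      intro T hTG hTF
      have h1 := (mem_filter.mp hTG).2.1
      exact h1 ⟨0, hd⟩ (mem_biUnion.mpr ⟨T, hTF, mem_image_of_mem _ (mem_univ _)⟩)
    have hcnt : ∀ (S : Finset V), ∀ T ∈ G,
        cntG f S (insert T F) = cntG f S F + (if T ∈ f S then 1 else 0) := by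
      intro S T hTG
      unfold cntG
      rw [Finset.filter_insert]
      split_ifs with h
      · rw [card_insert_of_notMem (fun hc => hTnotF T hTG (filter_subset _ _ hc))]
      · rw [add_zero]
    -- averaging
    have hsum : ∑ T ∈ G, ∑ S ∈ 𝒮, lam ^ cntG f S (insert T F) ≤
        ∑ T ∈ G, (r * ∑ S ∈ 𝒮, lam ^ cntG f S F) := by
      rw [Finset.sum_comm, Finset.sum_const, nsmul_eq_mul]
      calc ∑ S ∈ 𝒮, ∑ T ∈ G, lam ^ cntG f S (insert T F)
          ≤ ∑ S ∈ 𝒮, lam ^ cntG f S F * ((G.card : ℝ) * r) := by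
            refine sum_le_sum ?_
            intro S hS
            have h1 : ∑ T ∈ G, lam ^ cntG f S (insert T F) =
                lam ^ cntG f S F * ∑ T ∈ G, (if T ∈ f S then lam else 1) := by
              rw [mul_sum]
              refine sum_congr rfl ?_
              intro T hT
              rw [hcnt S T hT]
              split_ifs with h
              · rw [pow_succ]
              · rw [add_zero, mul_one]
            rw [h1]
            have gS := hcount S hS
            have h2 : ∑ T ∈ G, (if T ∈ f S then lam else (1:ℝ)) ≤ (G.card : ℝ) * r := by
              rw [Finset.sum_ite, Finset.sum_const, Finset.sum_const, nsmul_eq_mul, nsmul_eq_mul]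
              have h3 : ((G.filter fun T => ¬ T ∈ f S).card : ℝ) =
                  (G.card : ℝ) - ((G.filter fun T => T ∈ f S).card : ℝ) := by
                have := Finset.card_filter_add_card_filter_not
                  (s := G) (p := fun T => T ∈ f S)
                have h4 : ((G.filter fun T => T ∈ f S).card : ℝ) +
                    ((G.filter fun T => ¬ T ∈ f S).card : ℝ) = (G.card : ℝ) := by
                  exact_mod_cast this
                linarith
              rw [h3, mul_one]
              have h5 : (1 - lam) * ((G.filter fun T => T ∈ f S).card : ℝ) ≥
                  (1 - lam) * (p * (n:ℝ)^d) := by nlinarith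
              have h6 : (1 - lam) * (p * (n:ℝ)^d) ≥ (1 - lam) * (p * (G.card:ℝ)) := by
                refine mul_le_mul_of_nonneg_left ?_ (by linarith : (0:ℝ) ≤ 1 - lam)
                exact mul_le_mul_of_nonneg_left hGle hp.le
              rw [hrdef]; nlinarith
            have hpos : (0:ℝ) ≤ lam ^ cntG f S F := by positivity
            exact mul_le_mul_of_nonneg_left h2 hpos
        _ = (G.card : ℝ) * (r * ∑ S ∈ 𝒮, lam ^ cntG f S F) := by
            rw [← sum_mul]; ring
    obtain ⟨T, hTG, hT⟩ := Finset.exists_le_of_sum_le hGne hsum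
    refine ⟨insert T F, ?_, ?_, ?_, ?_⟩
    · rw [card_insert_of_notMem (hTnotF T hTG), hFcard]
    · intro T' hT'
      rcases mem_insert.mp hT' with h | h
      · subst h; exact (mem_filter.mp hTG).2.2
      · exact hgood T' h
    · have hTavoid := (mem_filter.mp hTG).2.1
      have hmemU : ∀ T' ∈ F, ∀ j : Fin d, T' j ∈ U := by
        intro T' hT' j
        exact mem_biUnion.mpr ⟨T', hT', mem_image_of_mem _ (mem_univ _)⟩
      intro T1 h1 T2 h2 hne i j
      rcases mem_insert.mp h1 with h1' | h1' <;> rcases mem_insert.mp h2 with h2' | h2'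
      · exact absurd (h1'.trans h2'.symm) hne
      · subst h1'
        intro hc
        exact hTavoid i (hc ▸ hmemU T2 h2' j)
      · subst h2'
        intro hc
        exact hTavoid j (hc ▸ hmemU T1 h1' i)
      · exact hdisj T1 h1' T2 h2' hne i j
    · have hr0' : (0:ℝ) ≤ r := hr0
      calc ∑ S ∈ 𝒮, lam ^ cntG f S (insert T F) ≤ r * ∑ S ∈ 𝒮, lam ^ cntG f S F := hT
        _ ≤ r * ((𝒮.card : ℝ) * r ^ k) := mul_le_mul_of_nonneg_left hPhi hr0'
        _ = (𝒮.card : ℝ) * r ^ (k+1) := by rw [pow_succ]; ring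

theorem statement12 (m d : ℕ) (hm : 0 < m) (hd : 0 < d) (a b c : ℝ)
    (ha : 0 < a) (hb : 0 < b ∧ b < a / (2 * d))
    (hc : 0 < c ∧ c < 2 * b * (a / (2 * d) - b)) :
    ∃ n₀ : ℕ, ∀ (V : Type) [Fintype V], n₀ ≤ Fintype.card V →
      ∀ f : Finset V → Set (Fin d → V),
        (∀ S : Finset V, S.card = m →
          a * (Fintype.card V : ℝ) ^ d ≤ ((f S).ncard : ℝ)) →
        ∃ F : Set (Fin d → V),
          -- every element of F is a good tuple
          (∀ T ∈ F, ∃ S : Finset V, S.card = m ∧ T ∈ f S) ∧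
          (F.ncard : ℝ) ≤ b * (Fintype.card V : ℝ) / d ∧
          (∀ S : Finset V, S.card = m →
            c * (Fintype.card V : ℝ) ≤ ((f S ∩ F).ncard : ℝ)) ∧
          -- coordinate sets of distinct tuples in F are pairwise disjoint
          (∀ T ∈ F, ∀ T' ∈ F, T ≠ T' → ∀ i j : Fin d, T i ≠ T' j) := by
  classical
  obtain ⟨hb0, hb2⟩ := hb
  obtain ⟨hc0, hc2⟩ := hc
  have hdR : (0:ℝ) < (d:ℝ) := by exact_mod_cast hd
  by_cases hA : a ≤ 1
  swap
  · -- a > 1 : hypothesis is contradictory for n ≥ m + 1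
    push_neg at hA
    refine ⟨m + 1, ?_⟩
    intro V _ hcard f hf
    exfalso
    have hmn : m ≤ Fintype.card V := by omega
    obtain ⟨S, -, hScard⟩ := Finset.exists_subset_card_eq
      (by simpa using hmn : m ≤ (Finset.univ : Finset V).card)
    have h1 := hf S hScard
    have h4 : (f S).ncard ≤ (Fintype.card V) ^ d := by
      have h5 := Set.ncard_le_ncard (Set.subset_univ (f S)) Set.finite_univ
      rwa [Set.ncard_univ, Nat.card_eq_fintype_card, Fintype.card_fun, Fintype.card_fin] at h5
    have h4R : ((f S).ncard : ℝ) ≤ ((Fintype.card V : ℝ)) ^ d := by exact_mod_cast h4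
    have hnR : (0:ℝ) < (Fintype.card V : ℝ) := by
      have : 0 < Fintype.card V := by omega
      exact_mod_cast this
    have hpd : (0:ℝ) < ((Fintype.card V : ℝ)) ^ d := pow_pos hnR d
    nlinarith
  · -- main case a ≤ 1
    set p : ℝ := a - b * d with hpdef
    have hbd : b * d < a / 2 := by
      rw [lt_div_iff₀ (by linarith : (0:ℝ) < 2 * d)] at hb2
      linarith
    have hp : 0 < p := by rw [hpdef]; linarith
    have hp1 : p ≤ 1 := by
      rw [hpdef]
      nlinarith [mul_nonneg hb0.le hdR.le]
    have hcd : c * d < b * p := by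
      have h1 : c * d < 2 * b * (a / (2 * (d:ℝ)) - b) * d := by
        exact mul_lt_mul_of_pos_right hc2 hdR
      have h2 : 2 * b * (a / (2 * (d:ℝ)) - b) * d = a * b - 2 * b^2 * d := by
        field_simp
      have h3 : (0:ℝ) ≤ b^2 * d := by positivity
      have h4 : b * p = a * b - b^2 * d := by rw [hpdef]; ring
      linarith
    set lam : ℝ := (c * d / (b * p) + 1) / 2 with hlamdef
    have hbp : 0 < b * p := mul_pos hb0 hp
    have hq0 : 0 < c * (d:ℝ) / (b*p) := by positivity
    have hq1 : c * (d:ℝ) / (b*p) < 1 := (div_lt_one hbp).mpr hcd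
    have hlam0 : 0 < lam := by rw [hlamdef]; linarith
    have hlam1 : lam < 1 := by rw [hlamdef]; linarith
    have hlamgt : c * (d:ℝ) / (b*p) < lam := by rw [hlamdef]; linarith
    set r : ℝ := 1 - p * (1 - lam) with hrdef
    have hrlam : lam ≤ r := by rw [hrdef]; nlinarith
    have hr0 : 0 < r := lt_of_lt_of_le hlam0 hrlam
    have hr1 : r < 1 := by rw [hrdef]; nlinarith
    set A : ℝ := -Real.log r with hAdef
    set Bq : ℝ := -Real.log lam with hBdef
    have hlogrA : Real.log r = -A := by rw [hAdef]; ring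
    have hloglamB : Real.log lam = -Bq := by rw [hBdef]; ring
    have hA : p * (1 - lam) ≤ A := by
      have h := Real.log_le_sub_one_of_pos hr0
      rw [hrdef] at h
      rw [hAdef]; linarith
    have hBq : Bq ≤ (1 - lam)/lam := by
      have h1 := Real.log_le_sub_one_of_pos (by positivity : (0:ℝ) < lam⁻¹)
      rw [Real.log_inv] at h1
      have h2 : lam⁻¹ - 1 = (1-lam)/lam := by field_simp
      rw [hBdef]; linarith [h2 ▸ h1]
    have hA0 : 0 < A := by
      have := Real.log_neg hr0 hr1
      rw [hAdef]; linarith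
    have hB0 : 0 ≤ Bq := by
      have := Real.log_nonpos hlam0.le hlam1.le
      rw [hBdef]; linarith
    set eps : ℝ := (b / d) * A - c * Bq with hepsdef
    clear_value p lam r A Bq eps
    have heps : 0 < eps := by
      have h1 : (b/(d:ℝ)) * (p * (1-lam)) ≤ (b/d) * A :=
        mul_le_mul_of_nonneg_left hA (by positivity)
      have h2 : c * Bq ≤ c * ((1-lam)/lam) := mul_le_mul_of_nonneg_left hBq hc0.le
      have h3 : c / lam < b * p / d := by
        rw [div_lt_div_iff₀ hlam0 hdR]
        have := (div_lt_iff₀ hbp).mp hlamgt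
        linarith
      have h4 : 0 < (1 - lam) * (b*p/(d:ℝ) - c/lam) := mul_pos (by linarith) (by linarith)
      have h5 : (1-lam)*(b*p/(d:ℝ) - c/lam) = (b/d)*(p*(1-lam)) - c*((1-lam)/lam) := by
        field_simp
      rw [hepsdef]; linarith
    refine ⟨max (m+1) (⌈(4*(m:ℝ)/eps)^2⌉₊ + ⌈2*(A+1)/eps⌉₊ + 1), ?_⟩
    intro V _ hcard f hf
    set n : ℕ := Fintype.card V with hndef
    have hm1n : m + 1 ≤ n := le_trans (le_max_left _ _) hcard
    have hceiln : ⌈(4*(m:ℝ)/eps)^2⌉₊ + ⌈2*(A+1)/eps⌉₊ + 1 ≤ n := le_trans (le_max_right _ _) hcard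
    have hmn : m ≤ n := by omega
    have hn0 : 0 < n := by omega
    have hnR : (0:ℝ) < (n:ℝ) := by exact_mod_cast hn0
    -- numeric key inequality
    have hkey : (m:ℝ) * Real.log n + (A + 1) ≤ eps * n := by
      have hsq : ((4*(m:ℝ)/eps)^2 : ℝ) ≤ (n:ℝ) :=
        le_trans (Nat.le_ceil _) (by exact_mod_cast (by omega : ⌈(4*(m:ℝ)/eps)^2⌉₊ ≤ n))
      have hA1 : 2*(A+1)/eps ≤ (n:ℝ) :=
        le_trans (Nat.le_ceil _) (by exact_mod_cast (by omega : ⌈2*(A+1)/eps⌉₊ ≤ n))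
      have hsn : (4*(m:ℝ)/eps) ≤ Real.sqrt n := by
        have hs := Real.sqrt_le_sqrt hsq
        rwa [Real.sqrt_sq (by positivity)] at hs
      have hsqrt0 : (0:ℝ) < Real.sqrt n := Real.sqrt_pos.mpr hnR
      have hsq2 : Real.sqrt (n:ℝ) * Real.sqrt (n:ℝ) = (n:ℝ) := Real.mul_self_sqrt hnR.le
      have hlog : Real.log n ≤ 2 * Real.sqrt n := by
        have hlogsq : Real.log ((n:ℝ)) = 2 * Real.log (Real.sqrt n) := by
          conv_lhs => rw [← Real.sq_sqrt hnR.le]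
          rw [Real.log_pow]
          push_cast; ring
        have h2' := Real.log_le_sub_one_of_pos hsqrt0
        linarith
      have hmlog : (m:ℝ) * Real.log n ≤ eps/2 * n := by
        have hm0 : (0:ℝ) ≤ (m:ℝ) := Nat.cast_nonneg m
        have h4 : 4*(m:ℝ) ≤ eps * Real.sqrt n := by
          calc 4*(m:ℝ) = 4*(m:ℝ)/eps*eps := by field_simp
            _ ≤ Real.sqrt n * eps := mul_le_mul_of_nonneg_right hsn heps.le
            _ = eps * Real.sqrt n := mul_comm _ _
        have hlogn0 : 0 ≤ Real.log (n:ℝ) := Real.log_nonneg (by exact_mod_cast hn0)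
        calc (m:ℝ) * Real.log n ≤ (m:ℝ) * (2*Real.sqrt n) :=
              mul_le_mul_of_nonneg_left hlog hm0
          _ ≤ eps/2 * n := by
              nlinarith [mul_nonneg (sub_nonneg.mpr h4) (Real.sqrt_nonneg (n:ℝ)), hsq2]
      have hA2 : A + 1 ≤ eps/2 * n := by
        rw [div_le_iff₀ heps] at hA1
        linarith
      linarith
    -- apply the greedy lemma
    set k : ℕ := ⌊b * (n:ℝ) / d⌋₊ with hkdef
    have hk : (k:ℝ) ≤ b * n / d := Nat.floor_le (by positivity)
    have hk' : b * (n:ℝ) / d - 1 < (k:ℝ) := by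
      have := Nat.lt_floor_add_one (b * (n:ℝ) / d)
      rw [hkdef]; push_cast; linarith
    clear_value k
    have hrge0 : (0:ℝ) ≤ 1 - p * (1 - lam) := by rw [← hrdef]; linarith
    obtain ⟨F, hFcard, hgood, hdisj, hPhi⟩ :=
      greedy d m hd hm f a b lam p hb0.le hp hpdef hlam0 hlam1.le hrge0 hmn hf k hk
    refine ⟨(↑F : Set (Fin d → V)), ?_, ?_, ?_, ?_⟩
    · intro T hT
      exact hgood T hT
    · rw [Set.ncard_coe_finset, hFcard]
      exact hk
    · intro S hSm
      by_contra hcon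
      push_neg at hcon
      have hcnt_eq : (f S ∩ (↑F : Set (Fin d → V))).ncard = cntG f S F := by
        unfold cntG
        rw [← Set.ncard_coe_finset]
        congr 1
        ext T
        simp [and_comm]
      set cS : ℕ := cntG f S F with hcSdef
      have hlt : (cS:ℝ) < c * n := by
        rw [hcnt_eq] at hcon
        exact_mod_cast hcon
      have hmem : S ∈ powersetCard m (univ : Finset V) := mem_powersetCard_univ.mpr hSm
      have h1 : lam ^ cS ≤ ∑ S' ∈ powersetCard m (univ : Finset V), lam ^ cntG f S' F :=
        Finset.single_le_sum (f := fun S' => lam ^ cntG f S' F)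
          (fun S' _ => by positivity) hmem
      set C : ℕ := (powersetCard m (univ : Finset V)).card with hCdef
      have hC : C = n.choose m := by rw [hCdef, card_powersetCard, card_univ]
      have hC0 : 0 < C := by rw [hC]; exact Nat.choose_pos hmn
      have hC0R : (0:ℝ) < (C:ℝ) := by exact_mod_cast hC0
      have hCpow : (C:ℝ) ≤ (n:ℝ)^m := by
        rw [hC]
        exact_mod_cast Nat.choose_le_pow n m
      have hCr : (C:ℝ) * r^k < lam ^ (c * (n:ℝ)) := by
        have hpos : (0:ℝ) < (C:ℝ) * r^k := mul_pos hC0R (pow_pos hr0 k)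
        rw [Real.rpow_def_of_pos hlam0, ← Real.exp_log hpos]
        apply Real.exp_lt_exp.mpr
        rw [Real.log_mul (ne_of_gt hC0R) (ne_of_gt (pow_pos hr0 k)), Real.log_pow]
        have hlogC : Real.log C ≤ (m:ℝ) * Real.log n := by
          calc Real.log (C:ℝ) ≤ Real.log ((n:ℝ)^m) := Real.log_le_log hC0R hCpow
            _ = (m:ℝ) * Real.log n := by rw [Real.log_pow]
        have hlogr : Real.log r < 0 := Real.log_neg hr0 hr1
        have hklogr : (k:ℝ) * Real.log r ≤ (b*(n:ℝ)/d - 1) * Real.log r :=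
          mul_le_mul_of_nonpos_right hk'.le hlogr.le
        have hrw : (b*(n:ℝ)/d - 1) * Real.log r = -((b/d) * A * n) + A := by
          rw [hlogrA]; field_simp; ring
        have hrw2 : Real.log lam * (c * (n:ℝ)) = -(c * Bq * n) := by rw [hloglamB]; ring
        have hepsn : eps * n = (b/(d:ℝ))*A*n - c*Bq*n := by rw [hepsdef]; ring
        rw [hrw2]
        linarith
      have h2 : lam ^ (c * (n:ℝ)) ≤ lam ^ ((cS:ℕ):ℝ) :=
        Real.rpow_le_rpow_of_exponent_ge hlam0 hlam1.le hlt.le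
      have h3 : lam ^ ((cS:ℕ):ℝ) = lam ^ cS := Real.rpow_natCast lam cS
      rw [h3] at h2
      rw [← hrdef] at hPhi
      linarith
    · intro T hT T' hT' hne i j
      exact hdisj T hT T' hT' hne i j
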